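/- The 9-dimensional bracket structure E^3_{9,5}, defined on basis {X_0,...,X_8} by [X_0,X_i]=X_{i+1} for i=1,...,6; [X_0,X_8]=X_6; [X_1,X_4]=X_8; [X_1,X_5]=2X_6; [X_2,X_3]=-X_8; [X_2,X_4]=-X_6; [X_2,X_5]=2X_7; [X_3,X_4]=-3X_7 (other brackets zero up to antisymmetry), satisfies the Jacobi identity, hence defines a Lie algebra. -/
import Mathlib


open Finset

/-- The `k`-th standard basis vector of `ℂⁿ` (zero if `k ≥ n`). -/
noncomputable def E (n k : ℕ) : Fin n → ℂ := fun t => if (t : ℕ) = k then 1 else 0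

/-- The bilinear bracket on `ℂⁿ` determined by structure constants `s`, antisymmetrized:
`[e_i, e_j] = s i j - s j i`. -/
noncomputable def brkt (n : ℕ) (s : ℕ → ℕ → Fin n → ℂ) (x y : Fin n → ℂ) : Fin n → ℂ :=
  ∑ i : Fin n, ∑ j : Fin n, (x i * y j) • (s (i : ℕ) (j : ℕ) - s (j : ℕ) (i : ℕ))

/-- Structure constants common to `E¹_{9,5}`, `E²_{9,5}`, `E³_{9,5}`, with parameters
`p, q, r, s` giving the coefficients of `X₇` in `[X₁,X₆]`, `[X₂,X₅]`, `[X₂,X₈]`, `[X₃,X₄]`: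
`E¹ = sE95 3 (-1) (-3) 0`, `E² = sE95 1 1 (-1) (-2)`, `E³ = sE95 0 2 0 (-3)`. -/
noncomputable def sE95 (p q r s : ℂ) : ℕ → ℕ → Fin 9 → ℂ := fun i j =>
  (if i = 0 ∧ 1 ≤ j ∧ j ≤ 6 then E 9 (j + 1) else 0) +
  (if i = 0 ∧ j = 8 then E 9 6 else 0) +
  (if i = 1 ∧ j = 4 then E 9 8 else 0) +
  (if i = 1 ∧ j = 5 then (2 : ℂ) • E 9 6 else 0) +
  (if i = 2 ∧ j = 3 then -E 9 8 else 0) +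
  (if i = 2 ∧ j = 4 then -E 9 6 else 0) +
  (if i = 1 ∧ j = 6 then p • E 9 7 else 0) +
  (if i = 2 ∧ j = 5 then q • E 9 7 else 0) +
  (if i = 2 ∧ j = 8 then r • E 9 7 else 0) +
  (if i = 3 ∧ j = 4 then s • E 9 7 else 0)

/-! Auxiliary integer model -/

def EZ' (k : ℕ) : Fin 9 → ℤ := fun t => if (t : ℕ) = k then 1 else 0

def sZ' : ℕ → ℕ → Fin 9 → ℤ := fun i j =>
  (if i = 0 ∧ 1 ≤ j ∧ j ≤ 6 then EZ' (j + 1) else 0) +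
  (if i = 0 ∧ j = 8 then EZ' 6 else 0) +
  (if i = 1 ∧ j = 4 then EZ' 8 else 0) +
  (if i = 1 ∧ j = 5 then (2 : ℤ) • EZ' 6 else 0) +
  (if i = 2 ∧ j = 3 then -EZ' 8 else 0) +
  (if i = 2 ∧ j = 4 then -EZ' 6 else 0) +
  (if i = 1 ∧ j = 6 then (0 : ℤ) • EZ' 7 else 0) +
  (if i = 2 ∧ j = 5 then (2 : ℤ) • EZ' 7 else 0) +
  (if i = 2 ∧ j = 8 then (0 : ℤ) • EZ' 7 else 0) +
  (if i = 3 ∧ j = 4 then (-3 : ℤ) • EZ' 7 else 0)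

def dZ' (i j t : Fin 9) : ℤ := sZ' i j t - sZ' j i t

noncomputable def dC' (i j t : Fin 9) : ℂ :=
  sE95 0 2 0 (-3) (i : ℕ) (j : ℕ) t - sE95 0 2 0 (-3) (j : ℕ) (i : ℕ) t

lemma cast_sZ' (i j : ℕ) (t : Fin 9) : ((sZ' i j t : ℤ) : ℂ) = sE95 0 2 0 (-3) i j t := by
  simp only [sZ', sE95, EZ', E, Pi.add_apply, apply_ite (fun f : Fin 9 → ℤ => f t),
    apply_ite (fun f : Fin 9 → ℂ => f t), Pi.smul_apply, Pi.neg_apply, Pi.zero_apply,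
    smul_eq_mul, apply_ite (Int.cast : ℤ → ℂ)]
  push_cast
  ring

lemma cast_dZ' (i j t : Fin 9) : ((dZ' i j t : ℤ) : ℂ) = dC' i j t := by
  simp only [dZ', dC', Int.cast_sub, cast_sZ']

set_option maxHeartbeats 4000000 in
lemma keyZ' : ∀ i j k t : Fin 9,
    ∑ m : Fin 9, (dZ' j k m * dZ' i m t + dZ' k i m * dZ' j m t + dZ' i j m * dZ' k m t) = 0 := by
  decide

lemma keyC' (i j k t : Fin 9) :
    ∑ m : Fin 9, (dC' j k m * dC' i m t + dC' k i m * dC' j m t + dC' i j m * dC' k m t) = 0 := by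
  have h := keyZ' i j k t
  calc ∑ m : Fin 9, (dC' j k m * dC' i m t + dC' k i m * dC' j m t + dC' i j m * dC' k m t)
      = ((∑ m : Fin 9, (dZ' j k m * dZ' i m t + dZ' k i m * dZ' j m t + dZ' i j m * dZ' k m t) : ℤ) : ℂ) := by
        push_cast [cast_dZ']
        rfl
    _ = 0 := by rw [h]; norm_num

lemma brkt_apply (s : ℕ → ℕ → Fin 9 → ℂ) (x y : Fin 9 → ℂ) (t : Fin 9) :
    brkt 9 s x y t = ∑ i : Fin 9, ∑ j : Fin 9,
      x i * y j * (s (i : ℕ) (j : ℕ) t - s (j : ℕ) (i : ℕ) t) := by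
  simp [brkt, Finset.sum_apply, Pi.smul_apply, Pi.sub_apply, smul_eq_mul]

lemma tri (x y z : Fin 9 → ℂ) (t : Fin 9) :
    brkt 9 (sE95 0 2 0 (-3)) x (brkt 9 (sE95 0 2 0 (-3)) y z) t =
      ∑ i : Fin 9, ∑ j : Fin 9, ∑ k : Fin 9,
        x i * y j * z k * ∑ m : Fin 9, dC' j k m * dC' i m t := by
  simp only [brkt_apply, dC', Finset.sum_mul, Finset.mul_sum]
  refine Finset.sum_congr rfl fun i _ => ?_
  rw [Finset.sum_comm]
  refine Finset.sum_congr rfl fun j _ => ?_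
  rw [Finset.sum_comm]
  refine Finset.sum_congr rfl fun k _ => Finset.sum_congr rfl fun m _ => by ring

lemma rot (f : Fin 9 → Fin 9 → Fin 9 → ℂ) :
    ∑ a : Fin 9, ∑ b : Fin 9, ∑ c : Fin 9, f a b c
      = ∑ c : Fin 9, ∑ a : Fin 9, ∑ b : Fin 9, f a b c := by
  calc ∑ a : Fin 9, ∑ b : Fin 9, ∑ c : Fin 9, f a b c
      = ∑ a : Fin 9, ∑ c : Fin 9, ∑ b : Fin 9, f a b c :=
        Finset.sum_congr rfl fun a _ => Finset.sum_comm
    _ = ∑ c : Fin 9, ∑ a : Fin 9, ∑ b : Fin 9, f a b c := Finset.sum_comm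

/-- the bracket of `E³_{9,5}` satisfies the Jacobi identity. -/
theorem stmt_13 :
    ∀ x y z : Fin 9 → ℂ,
      brkt 9 (sE95 0 2 0 (-3)) x (brkt 9 (sE95 0 2 0 (-3)) y z) +
        brkt 9 (sE95 0 2 0 (-3)) y (brkt 9 (sE95 0 2 0 (-3)) z x) +
        brkt 9 (sE95 0 2 0 (-3)) z (brkt 9 (sE95 0 2 0 (-3)) x y) = 0 := by
  intro x y z
  funext t
  simp only [Pi.add_apply, Pi.zero_apply]
  rw [tri x y z t, tri y z x t, tri z x y t,
    rot (fun a b c => y a * z b * x c * ∑ m : Fin 9, dC' b c m * dC' a m t),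
    rot (fun a b c => z a * x b * y c * ∑ m : Fin 9, dC' b c m * dC' a m t),
    rot (fun c a b => z a * x b * y c * ∑ m : Fin 9, dC' b c m * dC' a m t)]
  rw [← Finset.sum_add_distrib, ← Finset.sum_add_distrib]
  refine Finset.sum_eq_zero fun i _ => ?_
  rw [← Finset.sum_add_distrib, ← Finset.sum_add_distrib]
  refine Finset.sum_eq_zero fun j _ => ?_
  rw [← Finset.sum_add_distrib, ← Finset.sum_add_distrib]
  refine Finset.sum_eq_zero fun k _ => ?_
  have h := keyC' i j k t
  rw [Finset.sum_add_distrib, Finset.sum_add_distrib] at h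
  linear_combination x i * y j * z k * h
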